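/- For all r, p ∈ Q_E, the matching index of the tuned rational satisfies ⟦τ_r(p)⟧ = −⟦r⟧·⟦p⟧. -/

import Mathlib

open Filter Set
open scoped Classical

noncomputable section

/-- The Gauss map `G(x) = 1/x - ⌊1/x⌋` for `x ≠ 0`, `G(0) = 0`. -/
def gaussMap (x : ℝ) : ℝ := if x = 0 then 0 else 1 / x - ⌊1 / x⌋

/-- The value of the finite continued fraction `[0; a₁, …, aₙ]`. -/
def cfVal : List ℕ+ → ℝ
  | [] => 0
  | a :: l => 1 / ((a : ℝ) + cfVal l)

/-- The value of the infinite continued fraction `[0; a₁, a₂, …]`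
(the limit of the convergents). -/
def cfValInf (a : ℕ → ℕ+) : ℝ :=
  limUnder atTop (fun n => cfVal (List.ofFn fun i : Fin n => a i))

/-- The purely periodic sequence repeating the string `S`. -/
def perSeq (S : List ℕ+) : ℕ → ℕ+ := fun n => S.getD (n % S.length) 1

/-- `[0; overline{S}]`. -/
def cfPer (S : List ℕ+) : ℝ := cfValInf (perSeq S)

/-- The eventually periodic sequence starting with `T` and then repeating `S`. -/
def preperSeq (T S : List ℕ+) : ℕ → ℕ+ :=
  fun n => if n < T.length then T.getD n 1 else S.getD ((n - T.length) % S.length) 1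

/-- The continued fraction expansion of `r` of even length (when it exists). -/
def evenExp (r : ℝ) : List ℕ+ :=
  if h : ∃ S : List ℕ+, S ≠ [] ∧ Even S.length ∧ cfVal S = r then h.choose else []

/-- The continued fraction expansion of `r` of odd length (when it exists). -/
def oddExp (r : ℝ) : List ℕ+ :=
  if h : ∃ S : List ℕ+, S ≠ [] ∧ Odd S.length ∧ cfVal S = r then h.choose else []

/-- The golden ratio `g = (√5 - 1)/2`. -/
def gGolden : ℝ := (Real.sqrt 5 - 1) / 2

/-- The quadratic interval `I_r = ([0; overline{S₁}], [0; overline{S₀}])`. -/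
def quadInt (r : ℝ) : Set ℝ := Set.Ioo (cfPer (oddExp r)) (cfPer (evenExp r))

/-- The bifurcation (exceptional) set `E = [0,g] \ ⋃_{r ∈ ℚ ∩ (0,1)} I_r`. -/
def ESet : Set ℝ :=
  Set.Icc 0 gGolden \
    ⋃ r ∈ {x : ℝ | x ∈ Set.Ioo (0 : ℝ) 1 ∧ ∃ q : ℚ, (q : ℝ) = x}, quadInt r

/-- `Q_E`: the set of rationals `r ∈ (0,1)` whose quadratic interval `I_r` is maximal,
i.e. is a connected component of `[0,g] \ E`. -/
def QE : Set ℝ :=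
  {r | r ∈ Set.Ioo (0 : ℝ) 1 ∧ (∃ q : ℚ, (q : ℝ) = r) ∧
    ∃ x ∈ quadInt r, connectedComponentIn (Set.Icc 0 gGolden \ ESet) x = quadInt r}

/-- `ω(r) = [0; S₁ overline{S₀}]`. -/
def omegaPt (r : ℝ) : ℝ := cfValInf (preperSeq (oddExp r) (evenExp r))

/-- The tuning window `W_r = [ω(r), α₀)`. -/
def Wwin (r : ℝ) : Set ℝ := Set.Ico (omegaPt r) (cfPer (evenExp r))

/-- The `(n+1)`-st continued fraction digit of `x`: `a_{n+1} = ⌊1/G^n(x)⌋`. -/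
def cfDigit (x : ℝ) (n : ℕ) : ℕ+ := (⌊1 / (gaussMap^[n] x)⌋).toNat.toPNat'

/-- Concatenation of the first `n` blocks of a sequence of strings. -/
def blocksCat (B : ℕ → List ℕ+) : ℕ → List ℕ+
  | 0 => []
  | n + 1 => blocksCat B n ++ B n

/-- The infinite string obtained by concatenating all the blocks `B 0, B 1, …`
(each block assumed nonempty). -/
def flattenBlocks (B : ℕ → List ℕ+) : ℕ → ℕ+ :=
  fun n => (blocksCat B (n + 1)).getD n 1

/-- Tuning substitution on a single digit: `a ↦ S₁ S₀^{a-1}`. -/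
def tuneDigit (r : ℝ) (a : ℕ+) : List ℕ+ :=
  oddExp r ++ (List.replicate ((a : ℕ) - 1) (evenExp r)).flatten

/-- Tuning substitution on finite strings:
`(a₁, …, aₙ) ↦ S₁ S₀^{a₁-1} S₁ S₀^{a₂-1} ⋯ S₁ S₀^{aₙ-1}`. -/
def tuneList (r : ℝ) (A : List ℕ+) : List ℕ+ := (A.map (tuneDigit r)).flatten

/-- The tuning map `τ_r : [0,1] → [0,r]`:  `τ_r(0) = ω(r)`,
`τ_r([0; a₁, a₂, …]) = [0; S₁ S₀^{a₁-1} S₁ S₀^{a₂-1} …]`, the same substitution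
being applied to a finite expansion when the argument is rational. -/
def tune (r : ℝ) (x : ℝ) : ℝ :=
  if x = 0 then omegaPt r
  else if ∃ q : ℚ, (q : ℝ) = x then cfVal (tuneList r (evenExp x))
  else cfValInf (flattenBlocks (fun k => tuneDigit r (cfDigit x k)))

/-- The matching index `⟦A⟧ = a₁ - a₂ + a₃ - ⋯` of a finite string. -/
def mIdx : List ℕ+ → ℤ
  | [] => 0
  | a :: l => (a : ℤ) - mIdx l

/-- The matching index of a rational number: `⟦r⟧ = ⟦S₀(r)⟧`. -/
def mIdxR (r : ℝ) : ℤ := mIdx (evenExp r)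

/-- `B(t) = {x ∈ [0,1] : G^k(x) ≥ t for all k}`. -/
def BSet (t : ℝ) : Set ℝ := {x ∈ Set.Icc (0 : ℝ) 1 | ∀ k : ℕ, gaussMap^[k] x ≥ t}

/-- The regular Cantor set `K(Σ)`: numbers whose continued fraction expansion is an
infinite concatenation of strings from `Σ`. -/
def KSet (SS : Set (List ℕ+)) : Set ℝ :=
  {x | ∃ B : ℕ → List ℕ+, (∀ n, B n ∈ SS) ∧ (∀ n, B n ≠ []) ∧
    x = cfValInf (flattenBlocks B)}

/-- The set of untuned parameters `UT = [0,g] \ ⋃_{r ∈ Q_E} W_r`. -/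
def UTset : Set ℝ := Set.Icc 0 gGolden \ ⋃ r ∈ QE, Wwin r

/-- The set `Q_UT` of untuned rationals. -/
def QUT : Set ℝ := {r ∈ QE | ¬ ∃ s ∈ QE, ∃ p ∈ QE, r = tune s p}

/-- The order `S << T` on finite strings of positive integers. -/
def strLL (S T : List ℕ+) : Prop :=
  ∃ k, k < S.length ∧ k < T.length ∧ (∀ i < k, S.getD i 1 = T.getD i 1) ∧
    (if k % 2 = 1 then S.getD k 1 < T.getD k 1 else T.getD k 1 < S.getD k 1)

/-- A finite string is dominant if it has even length and is `<<`-smaller than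
all of its proper suffixes. -/
def Dominant (S : List ℕ+) : Prop :=
  Even S.length ∧ ∀ A B : List ℕ+, A ≠ [] → B ≠ [] → S = A ++ B → strLL S B

/-- The α-continued fraction transformation `T_α`. -/
def Talpha (α : ℝ) (x : ℝ) : ℝ :=
  if x = 0 then 0 else 1 / |x| - ⌊1 / |x| + 1 - α⌋

end

section Aux

lemma cfVal_nonneg_le_one (S : List ℕ+) : 0 ≤ cfVal S ∧ cfVal S ≤ 1 := by
  induction S with
  | nil => simp [cfVal]
  | cons a l ih =>
    have ha : (1 : ℝ) ≤ (a : ℝ) := by exact_mod_cast a.one_le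
    have hden : (1 : ℝ) ≤ (a : ℝ) + cfVal l := by linarith [ih.1]
    constructor
    · simp only [cfVal]
      positivity
    · simp only [cfVal]
      rw [div_le_one (by linarith)]
      linarith

lemma cfVal_nonneg (S : List ℕ+) : 0 ≤ cfVal S := (cfVal_nonneg_le_one S).1
lemma cfVal_le_one (S : List ℕ+) : cfVal S ≤ 1 := (cfVal_nonneg_le_one S).2

lemma cfVal_pos {S : List ℕ+} (h : S ≠ []) : 0 < cfVal S := by
  cases S with
  | nil => exact absurd rfl h
  | cons a l =>
    have ha : (1 : ℝ) ≤ (a : ℝ) := by exact_mod_cast a.one_le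
    have hden : (0 : ℝ) < (a : ℝ) + cfVal l := by linarith [cfVal_nonneg l]
    simp only [cfVal]
    positivity

lemma cfVal_eq_zero {S : List ℕ+} (h : cfVal S = 0) : S = [] := by
  by_contra hne
  exact ne_of_gt (cfVal_pos hne) h

lemma cfVal_eq_one {S : List ℕ+} (h : cfVal S = 1) : S = [1] := by
  cases S with
  | nil => simp [cfVal] at h
  | cons a l =>
    have ha : (1 : ℝ) ≤ (a : ℝ) := by exact_mod_cast a.one_le
    have hden : (0 : ℝ) < (a : ℝ) + cfVal l := by linarith [cfVal_nonneg l]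
    simp only [cfVal] at h
    rw [div_eq_one_iff_eq (ne_of_gt hden)] at h
    have hl0 : cfVal l = 0 := by linarith [cfVal_nonneg l]
    have hl : l = [] := cfVal_eq_zero hl0
    have ha1 : (a : ℝ) = 1 := by rw [hl0] at h; linarith
    have : a = 1 := by
      have : (a : ℕ) = 1 := by exact_mod_cast ha1
      exact PNat.coe_injective this
    rw [hl, this]

lemma cfVal_lt_one {S : List ℕ+} (h : S ≠ [1]) : cfVal S < 1 :=
  lt_of_le_of_ne (cfVal_le_one S) (fun he => h (cfVal_eq_one he))

lemma cfVal_unique : ∀ (S T : List ℕ+), cfVal S = cfVal T →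
    S.length % 2 = T.length % 2 → S = T := by
  intro S
  induction S with
  | nil =>
    intro T h _
    have h0 : cfVal T = 0 := by rw [← h]; simp [cfVal]
    exact (cfVal_eq_zero h0).symm
  | cons a l ih =>
    intro T h hpar
    cases T with
    | nil =>
      exfalso
      have := cfVal_pos (S := a :: l) (by simp)
      rw [h] at this
      simp [cfVal] at this
    | cons b m =>
      have hda : (0:ℝ) < (a : ℝ) + cfVal l := by
        have : (1:ℝ) ≤ (a:ℝ) := by exact_mod_cast a.one_le
        linarith [cfVal_nonneg l]
      have hdb : (0:ℝ) < (b : ℝ) + cfVal m := by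
        have : (1:ℝ) ≤ (b:ℝ) := by exact_mod_cast b.one_le
        linarith [cfVal_nonneg m]
      have heq : (a:ℝ) + cfVal l = (b:ℝ) + cfVal m := by
        simp only [cfVal] at h
        field_simp at h
        linarith
      -- helper to finish equal-head case
      have main : ∀ (x y : List ℕ+) (c d : ℕ+), cfVal x = 1 → cfVal y < 1 →
          (c:ℝ) + cfVal x = (d:ℝ) + cfVal y →
          (c :: x).length % 2 = (d :: y).length % 2 → False := by
        intro x y c d hx hy hcd hp
        have hxl : x = [1] := cfVal_eq_one hx
        -- (c:ℤ)+1-d = cfVal y ∈ [0,1) integer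
        have h1 : (((c:ℤ) + 1 - (d:ℤ) : ℤ) : ℝ) = cfVal y := by
          push_cast
          rw [← hx]; linarith
        have h2 : ((c:ℤ) + 1 - (d:ℤ)) = 0 := by
          have hge : (0:ℝ) ≤ (((c:ℤ) + 1 - (d:ℤ) : ℤ) : ℝ) := h1 ▸ cfVal_nonneg y
          have hlt : (((c:ℤ) + 1 - (d:ℤ) : ℤ) : ℝ) < 1 := h1 ▸ hy
          have hge' : (0:ℤ) ≤ (c:ℤ) + 1 - (d:ℤ) := by exact_mod_cast hge
          have hlt' : (c:ℤ) + 1 - (d:ℤ) < 1 := by exact_mod_cast hlt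
          omega
        have hy0 : cfVal y = 0 := by rw [← h1, h2]; simp
        have hyl : y = [] := cfVal_eq_zero hy0
        rw [hxl, hyl] at hp
        simp at hp
      by_cases hx1 : cfVal l = 1
      · by_cases hy1 : cfVal m = 1
        · -- both [1]
          have hl : l = [1] := cfVal_eq_one hx1
          have hm : m = [1] := cfVal_eq_one hy1
          have : (a:ℝ) = (b:ℝ) := by rw [hx1, hy1] at heq; linarith
          have hab : a = b := by
            have : (a:ℕ) = (b:ℕ) := by exact_mod_cast this
            exact PNat.coe_injective this
          rw [hl, hm, hab]
        · exact absurd hpar (by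
            intro hp
            exact main l m a b hx1 (lt_of_le_of_ne (cfVal_le_one m) hy1) heq hp)
      · by_cases hy1 : cfVal m = 1
        · exact absurd hpar.symm (by
            intro hp
            exact main m l b a hy1 (lt_of_le_of_ne (cfVal_le_one l) hx1) heq.symm hp)
        · -- both < 1: heads equal
          have hxlt := lt_of_le_of_ne (cfVal_le_one l) hx1
          have hylt := lt_of_le_of_ne (cfVal_le_one m) hy1
          have hab : a = b := by
            have h1 : ((a:ℤ) - (b:ℤ) : ℝ) = cfVal m - cfVal l := by push_cast; linarith
            have hlt : ((a:ℤ) - (b:ℤ) : ℝ) < 1 := by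
              rw [h1]; linarith [cfVal_nonneg l]
            have hgt : (-1 : ℝ) < ((a:ℤ) - (b:ℤ) : ℝ) := by
              rw [h1]; linarith [cfVal_nonneg m]
            have hlt' : (a:ℤ) - (b:ℤ) < 1 := by exact_mod_cast hlt
            have hgt' : (-1:ℤ) < (a:ℤ) - (b:ℤ) := by exact_mod_cast hgt
            have : (a:ℤ) = (b:ℤ) := by omega
            have : (a:ℕ) = (b:ℕ) := by exact_mod_cast this
            exact PNat.coe_injective this
          have hlm : cfVal l = cfVal m := by rw [hab] at heq; linarith
          have hp' : l.length % 2 = m.length % 2 := by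
            simp only [List.length_cons] at hpar; omega
          rw [hab, ih m hlm hp']

lemma cf_exists_aux : ∀ (n : ℕ) (q : ℚ), q.num.toNat ≤ n → 0 < q → q < 1 →
    ∃ (S : List ℕ+) (b : ℕ+), cfVal (S ++ [b + 1]) = (q : ℝ) := by
  intro n
  induction n with
  | zero =>
    intro q hn hq _
    exfalso
    have : 0 < q.num := Rat.num_pos.mpr hq
    omega
  | succ n ih =>
    intro q hn hq hq1
    have hinv : 1 < q⁻¹ := (one_lt_inv₀ hq).mpr hq1
    set a : ℤ := ⌊q⁻¹⌋ with ha
    have ha1 : 1 ≤ a := by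
      rw [ha, Int.le_floor]; exact_mod_cast hinv.le
    set q' : ℚ := Int.fract q⁻¹ with hq'
    have hq'0 : 0 ≤ q' := Int.fract_nonneg _
    have hq'1 : q' < 1 := Int.fract_lt_one _
    have hsum : (a : ℚ) + q' = q⁻¹ := by
      rw [hq', Int.fract]; ring
    have hqR : ((q⁻¹ : ℚ) : ℝ) = ((q : ℝ))⁻¹ := by push_cast; ring
    have hq0 : (q : ℝ) ≠ 0 := by exact_mod_cast hq.ne'
    by_cases h0 : q' = 0
    · -- q⁻¹ = a, a ≥ 2
      have hqa : (a : ℚ) = q⁻¹ := by rw [← hsum, h0, add_zero]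
      have ha2 : 2 ≤ a := by
        by_contra h
        have h1 : a = 1 := by omega
        rw [h1] at hqa
        have : q = 1 := by
          field_simp at hqa
          rw [← hqa]; simp
        exact (ne_of_lt hq1) this
      have hpos : 0 < (a - 1).toNat := by omega
      have hk : (((a - 1).toNat : ℤ)) = a - 1 := Int.toNat_of_nonneg (by omega)
      refine ⟨[], ⟨(a - 1).toNat, hpos⟩, ?_⟩
      simp only [List.nil_append, cfVal, add_zero]
      have hcast : ((⟨(a-1).toNat, hpos⟩ + 1 : ℕ+) : ℝ) = (a : ℝ) := by
        have h2 : (((a-1).toNat : ℕ) : ℝ) = (a : ℝ) - 1 := by exact_mod_cast hk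
        have h3 : ((⟨(a-1).toNat, hpos⟩ + 1 : ℕ+) : ℝ) = (((a-1).toNat : ℕ) : ℝ) + 1 := by
          norm_cast
        rw [h3, h2]; ring
      rw [hcast]
      have h4 : ((a : ℚ) : ℝ) = ((q⁻¹ : ℚ) : ℝ) := by rw [hqa]
      push_cast at h4
      rw [h4]
      field_simp
    · -- recurse
      have hq'pos : 0 < q' := lt_of_le_of_ne hq'0 (Ne.symm h0)
      have hnum : q'.num < q.num := Rat.fract_inv_num_lt_num_of_pos hq
      have hle : q'.num.toNat ≤ n := by
        have h1 : 0 < q.num := Rat.num_pos.mpr hq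
        omega
      obtain ⟨S, b, hS⟩ := ih q' hle hq'pos hq'1
      have hpos : 0 < a.toNat := by omega
      have hk : ((a.toNat : ℤ)) = a := Int.toNat_of_nonneg (by omega)
      refine ⟨⟨a.toNat, hpos⟩ :: S, b, ?_⟩
      erw [List.cons_append]
      simp only [cfVal]
      rw [hS]
      have hca : ((⟨a.toNat, hpos⟩ : ℕ+) : ℝ) = (a : ℝ) := by
        have h2 : ((a.toNat : ℕ) : ℝ) = (a : ℝ) := by exact_mod_cast hk
        have h3 : ((⟨a.toNat, hpos⟩ : ℕ+) : ℝ) = ((a.toNat : ℕ) : ℝ) := by norm_cast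
        rw [h3, h2]
      show (1:ℝ) / (((⟨a.toNat, hpos⟩ : ℕ+) : ℝ) + (q' : ℝ)) = (q : ℝ)
      rw [hca]
      have hsR : (a : ℝ) + (q' : ℝ) = ((q⁻¹ : ℚ) : ℝ) := by exact_mod_cast hsum
      rw [hsR, hqR, one_div, inv_inv]


lemma cfVal_sibling : ∀ (S : List ℕ+) (b : ℕ+),
    cfVal (S ++ [b + 1]) = cfVal (S ++ [b, 1]) := by
  intro S
  induction S with
  | nil =>
    intro b
    simp only [List.nil_append, cfVal, add_zero]
    have hb : (0:ℝ) < (b:ℝ) := by exact_mod_cast b.pos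
    have : ((b + 1 : ℕ+) : ℝ) = (b : ℝ) + 1 := by push_cast; ring
    rw [this]
    rw [show ((1:ℕ+):ℝ) = (1:ℝ) by norm_cast]
    norm_num
  | cons c l ih =>
    intro b
    simp only [List.cons_append, cfVal, List.append_eq]
    rw [ih]

lemma exps_exist (x : ℝ) (q : ℚ) (hx : (q : ℝ) = x) (h0 : 0 < q) (h1 : q < 1) :
    (∃ S : List ℕ+, S ≠ [] ∧ Even S.length ∧ cfVal S = x) ∧
    (∃ S : List ℕ+, S ≠ [] ∧ Odd S.length ∧ cfVal S = x) := by
  obtain ⟨S, b, hS⟩ := cf_exists_aux q.num.toNat q le_rfl h0 h1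
  have hS2 : cfVal (S ++ [b, 1]) = x := by rw [← cfVal_sibling, hS, hx]
  have hS1 : cfVal (S ++ [b + 1]) = x := by rw [hS, hx]
  have hlen1 : (S ++ [b + 1]).length = S.length + 1 := by simp
  have hlen2 : (S ++ [b, 1]).length = S.length + 2 := by simp
  rcases Nat.even_or_odd S.length with he | ho
  · exact ⟨⟨S ++ [b, 1], by simp, by rw [hlen2]; exact he.add (by norm_num), hS2⟩,
      ⟨S ++ [b + 1], by simp, by rw [hlen1]; exact Even.add_one he, hS1⟩⟩
  · exact ⟨⟨S ++ [b + 1], by simp, by rw [hlen1]; exact ho.add_one, hS1⟩,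
      ⟨S ++ [b, 1], by simp, by rw [hlen2]; exact ho.add_even (by norm_num), hS2⟩⟩

lemma evenExp_spec {x : ℝ} (h : ∃ S : List ℕ+, S ≠ [] ∧ Even S.length ∧ cfVal S = x) :
    evenExp x ≠ [] ∧ Even (evenExp x).length ∧ cfVal (evenExp x) = x := by
  rw [evenExp, dif_pos h]
  exact h.choose_spec

lemma oddExp_spec {x : ℝ} (h : ∃ S : List ℕ+, S ≠ [] ∧ Odd S.length ∧ cfVal S = x) :
    oddExp x ≠ [] ∧ Odd (oddExp x).length ∧ cfVal (oddExp x) = x := by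
  rw [oddExp, dif_pos h]
  exact h.choose_spec

lemma evenExp_cfVal {L : List ℕ+} (hne : L ≠ []) (hev : Even L.length) :
    evenExp (cfVal L) = L := by
  have hex : ∃ S : List ℕ+, S ≠ [] ∧ Even S.length ∧ cfVal S = cfVal L := ⟨L, hne, hev, rfl⟩
  obtain ⟨h1, h2, h3⟩ := evenExp_spec hex
  exact cfVal_unique _ _ h3 (by
    rw [Nat.even_iff] at h2 hev
    rw [h2, hev])

lemma mIdx_append (L M : List ℕ+) :
    mIdx (L ++ M) = mIdx L + (-1) ^ L.length * mIdx M := by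
  induction L with
  | nil => simp [mIdx]
  | cons a l ih =>
    simp only [List.cons_append, mIdx, List.append_eq, List.length_cons, pow_succ, ih]
    ring

lemma mIdx_flatten_replicate (k : ℕ) (S : List ℕ+) (h : Even S.length) :
    mIdx ((List.replicate k S).flatten) = k * mIdx S := by
  induction k with
  | zero => simp [mIdx]
  | succ n ih =>
    rw [List.replicate_succ, List.flatten_cons, mIdx_append, h.neg_one_pow, ih]
    push_cast
    ring

lemma length_flatten_replicate (k : ℕ) (S : List ℕ+) :
    ((List.replicate k S).flatten).length = k * S.length := by
  induction k with
  | zero => simp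
  | succ n ih => rw [List.replicate_succ, List.flatten_cons, List.length_append, ih]; ring

lemma tuneDigit_length_odd {r : ℝ} (ho : Odd (oddExp r).length)
    (he : Even (evenExp r).length) (a : ℕ+) : Odd (tuneDigit r a).length := by
  rw [tuneDigit, List.length_append, length_flatten_replicate]
  rcases ho with ⟨m, hm⟩
  rcases he with ⟨n, hn⟩
  exact ⟨m + ((a:ℕ) - 1) * n, by rw [hm, hn]; ring⟩

lemma mIdx_tuneDigit {r : ℝ} (ho : Odd (oddExp r).length)
    (he : Even (evenExp r).length) (a : ℕ+) :
    mIdx (tuneDigit r a) = mIdx (oddExp r) - ((a : ℤ) - 1) * mIdx (evenExp r) := by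
  rw [tuneDigit, mIdx_append, mIdx_flatten_replicate _ _ he, ho.neg_one_pow]
  have h1 : 1 ≤ (a : ℕ) := a.one_le
  have h2 : (((a:ℕ) - 1 : ℕ) : ℤ) = (a : ℤ) - 1 := by
    rw [Nat.cast_sub h1]
    norm_num
  rw [h2]
  ring

lemma tuneList_parity {r : ℝ} (ho : Odd (oddExp r).length)
    (he : Even (evenExp r).length) :
    ∀ A : List ℕ+, (tuneList r A).length % 2 = A.length % 2 := by
  intro A
  induction A with
  | nil => simp [tuneList]
  | cons a l ih =>
    have h1 : tuneList r (a :: l) = tuneDigit r a ++ tuneList r l := by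
      simp [tuneList]
    rw [h1, List.length_append, List.length_cons]
    obtain ⟨m, hm⟩ := tuneDigit_length_odd ho he a
    omega

lemma tuneList_ne_nil {r : ℝ} (hodd : oddExp r ≠ []) {A : List ℕ+} (hA : A ≠ []) :
    tuneList r A ≠ [] := by
  cases A with
  | nil => exact absurd rfl hA
  | cons a l =>
    have h1 : tuneList r (a :: l) = tuneDigit r a ++ tuneList r l := by
      simp [tuneList]
    rw [h1, tuneDigit]
    simp only [ne_eq, List.append_eq_nil_iff, List.append_assoc]
    intro h
    exact hodd h.1

lemma mIdx_tuneList {r : ℝ} (ho : Odd (oddExp r).length)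
    (he : Even (evenExp r).length) :
    ∀ A : List ℕ+, mIdx (tuneList r A) =
      (if A.length % 2 = 0 then 0 else mIdx (oddExp r) + mIdx (evenExp r))
        - mIdx (evenExp r) * mIdx A := by
  intro A
  induction A with
  | nil => simp [tuneList, mIdx]
  | cons a l ih =>
    have h1 : tuneList r (a :: l) = tuneDigit r a ++ tuneList r l := by
      simp [tuneList]
    obtain ⟨m, hm⟩ := tuneDigit_length_odd ho he a
    rw [h1, mIdx_append, hm, ih, mIdx_tuneDigit ho he, mIdx]
    rw [pow_succ, pow_mul]
    norm_num [List.length_cons]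
    rcases Nat.even_or_odd l.length with hle | hlo
    · rw [Nat.even_iff] at hle
      rw [if_pos hle, if_neg (by omega)]
      ring
    · rw [Nat.odd_iff] at hlo
      rw [if_neg (by omega), if_pos (by omega)]
      ring

end Aux

/-- For all `r, p ∈ Q_E`, `⟦τ_r(p)⟧ = -⟦r⟧·⟦p⟧`. -/
theorem matching_index_of_tuning (r p : ℝ) (hr : r ∈ QE) (hp : p ∈ QE) :
    mIdxR (tune r p) = -(mIdxR r * mIdxR p) := by
  obtain ⟨⟨hr0, hr1⟩, ⟨qr, hqr⟩, -⟩ := hr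
  obtain ⟨⟨hp0, hp1⟩, ⟨qp, hqp⟩, -⟩ := hp
  have hqr0 : 0 < qr := by exact_mod_cast hqr ▸ hr0
  have hqr1 : qr < 1 := by exact_mod_cast hqr ▸ hr1
  have hqp0 : 0 < qp := by exact_mod_cast hqp ▸ hp0
  have hqp1 : qp < 1 := by exact_mod_cast hqp ▸ hp1
  obtain ⟨hre, hro⟩ := exps_exist r qr hqr hqr0 hqr1
  obtain ⟨hpe, -⟩ := exps_exist p qp hqp hqp0 hqp1
  obtain ⟨hroN, hroO, -⟩ := oddExp_spec hro
  obtain ⟨hreN, hreE, -⟩ := evenExp_spec hre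
  obtain ⟨hpeN, hpeE, -⟩ := evenExp_spec hpe
  have hpne : p ≠ 0 := ne_of_gt hp0
  have htune : tune r p = cfVal (tuneList r (evenExp p)) := by
    rw [tune, if_neg hpne, if_pos ⟨qp, hqp⟩]
  have hLne : tuneList r (evenExp p) ≠ [] := tuneList_ne_nil hroN hpeN
  rw [Nat.even_iff] at hpeE
  have hLpar : (tuneList r (evenExp p)).length % 2 = 0 := by
    rw [tuneList_parity hroO hreE]
    exact hpeE
  have hmain := mIdx_tuneList hroO hreE (evenExp p)
  rw [if_pos hpeE] at hmain
  rw [mIdxR, htune, evenExp_cfVal hLne (Nat.even_iff.mpr hLpar), hmain, mIdxR, mIdxR]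
  ring
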